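/- arXiv:1606.09374 — 2 statements merged into one kernel-verified Lean document; each statement's English description precedes it below -/
import Mathlib

section
/- Let (X, μ) be a probability measure space where X is a compact metric space with Borel σ-algebra, and let (S_n) be a sequence of measure-preserving transformations of X such that for every Borel set A, μ(S_n⁻¹A Δ A) → 0 as n → ∞. Then S_n → Id in measure, i.e., for every ε > 0, μ({x : d(x, S_n x) ≥ ε}) → 0. -/
open MeasureTheory Filter Topology

theorem tendsto_id_in_measure_of_weak_convergence {X : Type*} [MetricSpace X] [CompactSpace X]
    [MeasurableSpace X] [BorelSpace X] (μ : Measure X) [IsProbabilityMeasure μ]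
    (S : ℕ → X → X) (hS : ∀ n, MeasurePreserving (S n) μ μ)
    (h : ∀ A : Set X, MeasurableSet A →
      Tendsto (fun n => μ (symmDiff (S n ⁻¹' A) A)) atTop (𝓝 0)) :
    ∀ ε > 0, Tendsto (fun n => μ {x | ε ≤ dist x (S n x)}) atTop (𝓝 0) := by
  intro ε hε
  set r := ε / 2 with hr
  have hr0 : 0 < r := by positivity
  obtain ⟨t, -, htfin, hcover⟩ :=
    finite_cover_balls_of_compact (isCompact_univ (X := X)) hr0
  have key : ∀ n, {x | ε ≤ dist x (S n x)} ⊆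
      ⋃ i ∈ htfin.toFinset, symmDiff (S n ⁻¹' Metric.ball i r) (Metric.ball i r) := by
    intro n x hx
    obtain ⟨i, hit, hxi⟩ := Set.mem_iUnion₂.1 (hcover (Set.mem_univ x))
    refine Set.mem_iUnion₂.2 ⟨i, htfin.mem_toFinset.2 hit, ?_⟩
    have hSx : S n x ∉ Metric.ball i r := by
      intro hS'
      have : dist x (S n x) < ε := by
        calc dist x (S n x) ≤ dist x i + dist i (S n x) := dist_triangle _ _ _
        _ < r + r := by
            rw [Metric.mem_ball] at hxi hS'
            rw [dist_comm i]
            exact add_lt_add hxi hS'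
        _ = ε := by rw [hr]; ring
      exact absurd hx (by simpa using this.not_ge)
    exact Or.inr ⟨hxi, hSx⟩
  have hle : ∀ n, μ {x | ε ≤ dist x (S n x)} ≤
      ∑ i ∈ htfin.toFinset, μ (symmDiff (S n ⁻¹' Metric.ball i r) (Metric.ball i r)) :=
    fun n => (measure_mono (key n)).trans (measure_biUnion_finset_le _ _)
  have hsum : Tendsto (fun n => ∑ i ∈ htfin.toFinset,
      μ (symmDiff (S n ⁻¹' Metric.ball i r) (Metric.ball i r))) atTop (𝓝 0) := by
    have := tendsto_finset_sum htfin.toFinset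
      (fun i _ => h (Metric.ball i r) measurableSet_ball)
    simpa using this
  exact tendsto_of_tendsto_of_tendsto_of_le_of_le tendsto_const_nhds hsum
    (fun n => zero_le) hle
end

section
/- Let T be an ergodic measure-preserving transformation of a probability space (X, B, μ). For every Borel set A with μ(A) ≥ 1 − 10⁻⁴ and every κ > 0, there exist a measurable set V ⊆ X with μ(V) > 0.99 and N₁ ∈ ℕ such that for all integers M, L ≥ N₁ with L/M ≥ κ and all x ∈ V: (1/L)·|{n ∈ [M, M+L] ∩ ℤ : Tⁿ x ∈ A}| ≥ 0.99. -/
open MeasureTheory Filter Topology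
open scoped Classical ENNReal

section BirkhoffAux

variable {X : Type*} [MeasurableSpace X] {μ : Measure X} [IsProbabilityMeasure μ] {T : X → X}

/-- Running maximum of Birkhoff sums, `maxBS T g N x = max_{0 ≤ n ≤ N} S_n g x`. -/
noncomputable def maxBS (T : X → X) (g : X → ℝ) : ℕ → X → ℝ
  | 0 => fun _ => 0
  | N + 1 => fun x => max (maxBS T g N x) (birkhoffSum T g (N + 1) x)

lemma maxBS_nonneg (T : X → X) (g : X → ℝ) (N : ℕ) (x : X) : 0 ≤ maxBS T g N x := by
  induction N with
  | zero => simp [maxBS]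
  | succ N ih => exact le_trans ih (le_max_left _ _)

lemma maxBS_mono (T : X → X) (g : X → ℝ) {N N' : ℕ} (h : N ≤ N') (x : X) :
    maxBS T g N x ≤ maxBS T g N' x := by
  induction N', h using Nat.le_induction with
  | base => exact le_rfl
  | succ N' hNN' ih => exact ih.trans (le_max_left _ _)

lemma birkhoffSum_le_maxBS (T : X → X) (g : X → ℝ) {n N : ℕ} (h : n ≤ N) (x : X) :
    birkhoffSum T g n x ≤ maxBS T g N x := by
  induction N with
  | zero =>
    interval_cases n
    simp [maxBS, birkhoffSum_zero]
  | succ N ih =>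
    rcases Nat.lt_succ_iff_lt_or_eq.mp (Nat.lt_succ_of_le h) with h' | h'
    · exact le_trans (ih (Nat.lt_succ_iff.mp h')) (le_max_left _ _)
    · subst h'; exact le_max_right _ _

lemma maxBS_cases (T : X → X) (g : X → ℝ) (N : ℕ) (x : X) :
    maxBS T g N x = 0 ∨ ∃ n ≤ N, maxBS T g N x = birkhoffSum T g (n + 1) x := by
  induction N with
  | zero => exact Or.inl rfl
  | succ N ih =>
    have hdef : maxBS T g (N + 1) x = max (maxBS T g N x) (birkhoffSum T g (N + 1) x) := rfl
    rcases max_cases (maxBS T g N x) (birkhoffSum T g (N + 1) x) with ⟨h, _⟩ | ⟨h, _⟩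
    · rcases ih with h0 | ⟨n, hn, he⟩
      · exact Or.inl (by rw [hdef, h, h0])
      · exact Or.inr ⟨n, hn.trans (Nat.le_succ N), by rw [hdef, h, he]⟩
    · exact Or.inr ⟨N, Nat.le_succ N, by rw [hdef, h]⟩

lemma measurable_birkhoffSum (hT : Measurable T) {g : X → ℝ} (hg : Measurable g) (n : ℕ) :
    Measurable (fun x => birkhoffSum T g n x) :=
  Finset.measurable_sum _ (fun k _ => hg.comp (hT.iterate k))

lemma measurable_maxBS (hT : Measurable T) {g : X → ℝ} (hg : Measurable g) (N : ℕ) :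
    Measurable (maxBS T g N) := by
  induction N with
  | zero => exact measurable_const
  | succ N ih => exact ih.max (measurable_birkhoffSum hT hg (N + 1))

lemma abs_birkhoffSum_le (T : X → X) {g : X → ℝ} {C : ℝ} (hb : ∀ x, |g x| ≤ C) (n : ℕ) (x : X) :
    |birkhoffSum T g n x| ≤ n * C := by
  calc |birkhoffSum T g n x| ≤ ∑ k ∈ Finset.range n, |g (T^[k] x)| :=
        Finset.abs_sum_le_sum_abs _ _
    _ ≤ ∑ _k ∈ Finset.range n, C := Finset.sum_le_sum fun k _ => hb _
    _ = n * C := by simp [mul_comm]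

/-- The maximal ergodic lemma (Garsia's proof). -/
lemma maximal_ergodic (hTm : MeasurePreserving T μ μ) {g : X → ℝ} (hg : Measurable g)
    {C : ℝ} (hb : ∀ x, |g x| ≤ C) :
    0 ≤ ∫ x in {x | ∃ n : ℕ, 0 < birkhoffSum T g (n + 1) x}, g x ∂μ := by
  have hb' : ∀ x, |g x| ≤ |C| := fun x => (hb x).trans (le_abs_self C)
  have hgi : Integrable g μ := by
    refine (integrable_const (|C|)).mono' hg.aestronglyMeasurable ?_
    exact .of_forall fun x => by simpa [Real.norm_eq_abs] using hb' x
  set E : ℕ → Set X := fun N => {x | 0 < maxBS T g N x} with hE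
  have hEm : ∀ N, MeasurableSet (E N) :=
    fun N => measurableSet_lt measurable_const (measurable_maxBS hTm.measurable hg N)
  have hMi : ∀ N, Integrable (maxBS T g N) μ := by
    intro N
    refine (integrable_const ((N + 1) * |C|)).mono'
      (measurable_maxBS hTm.measurable hg N).aestronglyMeasurable (.of_forall fun x => ?_)
    rw [Real.norm_eq_abs, abs_of_nonneg (maxBS_nonneg T g N x)]
    rcases maxBS_cases T g N x with h0 | ⟨n, hn, he⟩
    · rw [h0]; positivity
    · rw [he]
      refine le_trans (le_abs_self _) (le_trans (abs_birkhoffSum_le T hb' (n + 1) x) ?_)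
      have : ((n:ℝ) + 1) ≤ (N:ℝ) + 1 := by exact_mod_cast Nat.succ_le_succ hn
      push_cast
      nlinarith [abs_nonneg C]
  have hMTi : ∀ N, Integrable (fun x => maxBS T g N (T x)) μ :=
    fun N => (hTm.integrable_comp (hMi N).aestronglyMeasurable).mpr (hMi N)
  -- each truncated integral is nonnegative
  have key : ∀ N, 0 ≤ ∫ x in E N, g x ∂μ := by
    intro N
    have hptwise : ∀ x ∈ E N, maxBS T g N x - maxBS T g N (T x) ≤ g x := by
      intro x hx
      rcases maxBS_cases T g N x with h0 | ⟨n, hn, he⟩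
      · exact absurd h0 (ne_of_gt hx)
      · have : birkhoffSum T g (n + 1) x = g x + birkhoffSum T g n (T x) :=
          birkhoffSum_succ' T g n x
        have h2 : birkhoffSum T g n (T x) ≤ maxBS T g N (T x) :=
          birkhoffSum_le_maxBS T g hn (T x)
        rw [he, this]
        linarith
    have hsub : Integrable (fun x => maxBS T g N x - maxBS T g N (T x)) μ :=
      (hMi N).sub (hMTi N)
    have hint0 : ∫ x, (maxBS T g N x - maxBS T g N (T x)) ∂μ = 0 := by
      rw [integral_sub (hMi N) (hMTi N)]
      have : ∫ x, maxBS T g N (T x) ∂μ = ∫ x, maxBS T g N x ∂μ := by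
        rw [← MeasureTheory.integral_map hTm.measurable.aemeasurable
          (by rw [hTm.map_eq]; exact (measurable_maxBS hTm.measurable hg N).aestronglyMeasurable),
          hTm.map_eq]
      rw [this, sub_self]
    have hcompl : ∫ x in (E N)ᶜ, (maxBS T g N x - maxBS T g N (T x)) ∂μ ≤ 0 := by
      refine setIntegral_nonpos (hEm N).compl (fun x hx => ?_)
      have h1 : maxBS T g N x = 0 :=
        le_antisymm (not_lt.mp hx) (maxBS_nonneg T g N x)
      have h2 := maxBS_nonneg T g N (T x)
      linarith
    have hsplit := integral_add_compl (hEm N) hsub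
    have hEnonneg : 0 ≤ ∫ x in E N, (maxBS T g N x - maxBS T g N (T x)) ∂μ := by linarith
    calc (0:ℝ) ≤ ∫ x in E N, (maxBS T g N x - maxBS T g N (T x)) ∂μ := hEnonneg
      _ ≤ ∫ x in E N, g x ∂μ :=
        setIntegral_mono_on hsub.integrableOn hgi.integrableOn (hEm N) hptwise
  -- pass to the limit
  have hunion : (⋃ N, E N) = {x | ∃ n : ℕ, 0 < birkhoffSum T g (n + 1) x} := by
    ext x
    simp only [Set.mem_iUnion, Set.mem_setOf_eq, hE]
    constructor
    · rintro ⟨N, hN⟩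
      rcases maxBS_cases T g N x with h0 | ⟨n, _, he⟩
      · rw [h0] at hN; exact absurd hN (lt_irrefl 0)
      · exact ⟨n, he ▸ hN⟩
    · rintro ⟨n, hn⟩
      exact ⟨n + 1, lt_of_lt_of_le hn (birkhoffSum_le_maxBS T g le_rfl x)⟩
  have hmono : Monotone E := by
    intro N N' h x hx
    exact lt_of_lt_of_le hx (maxBS_mono T g h x)
  have htend := tendsto_setIntegral_of_monotone hEm hmono (hgi.integrableOn)
  rw [hunion] at htend
  exact ge_of_tendsto' htend key

lemma limsup_eq_limsup_of_tendsto_sub {v w : ℕ → ℝ}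
    (h : Tendsto (fun n => v n - w n) atTop (𝓝 0))
    (hw1 : IsBoundedUnder (· ≤ ·) atTop w) (hw2 : IsBoundedUnder (· ≥ ·) atTop w) :
    limsup v atTop = limsup w atTop := by
  have hd1 : IsBoundedUnder (· ≤ ·) atTop (fun n => v n - w n) := h.isBoundedUnder_le
  have hd2 : IsBoundedUnder (· ≥ ·) atTop (fun n => v n - w n) := h.isBoundedUnder_ge
  have hv1 : IsBoundedUnder (· ≤ ·) atTop v := by
    obtain ⟨a, ha⟩ := hd1; obtain ⟨b, hb⟩ := hw1
    rw [eventually_map] at ha hb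
    refine ⟨a + b, eventually_map.mpr ?_⟩
    filter_upwards [ha, hb] with n h1 h2
    have : v n = (v n - w n) + w n := by ring
    rw [this]; exact add_le_add h1 h2
  have hv2 : IsBoundedUnder (· ≥ ·) atTop v := by
    obtain ⟨a, ha⟩ := hd2; obtain ⟨b, hb⟩ := hw2
    rw [eventually_map] at ha hb
    refine ⟨a + b, eventually_map.mpr ?_⟩
    filter_upwards [ha, hb] with n h1 h2
    have : v n = (v n - w n) + w n := by ring
    rw [this]; exact add_le_add h1 h2
  have hmw : Tendsto (fun n => w n - v n) atTop (𝓝 0) := by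
    have := h.neg; simp only [neg_sub, neg_zero] at this; exact this
  apply le_antisymm
  · calc limsup v atTop = limsup (w + fun n => v n - w n) atTop := by
          congr 1; ext n; simp only [Pi.add_apply]; ring
      _ ≤ limsup w atTop + limsup (fun n => v n - w n) atTop :=
          limsup_add_le hw2 hw1 hd2.isCoboundedUnder_le hd1
      _ = limsup w atTop := by rw [h.limsup_eq, add_zero]
  · calc limsup w atTop = limsup (v + fun n => w n - v n) atTop := by
          congr 1; ext n; simp only [Pi.add_apply]; ring
      _ ≤ limsup v atTop + limsup (fun n => w n - v n) atTop :=
          limsup_add_le hv2 hv1 hmw.isBoundedUnder_ge.isCoboundedUnder_le hmw.isBoundedUnder_le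
      _ = limsup v atTop := by rw [hmw.limsup_eq, add_zero]

lemma birkhoffSum_sub_const (T : X → X) (g : X → ℝ) (a : ℝ) (n : ℕ) (x : X) :
    birkhoffSum T (fun y => g y - a) n x = birkhoffSum T g n x - n * a := by
  simp [birkhoffSum, Finset.sum_sub_distrib, mul_comm]

/-- A.e. upper bound for Birkhoff averages under ergodicity. -/
lemma birkhoff_limsup_le (hT : Ergodic T μ) {g : X → ℝ} (hg : Measurable g)
    {C : ℝ} (hb : ∀ x, |g x| ≤ C) {a : ℝ} (ha : ∫ x, g x ∂μ < a) :
    ∀ᵐ x ∂μ, limsup (fun n => birkhoffSum T g n x / n) atTop ≤ a := by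
  have hb' : ∀ x, |g x| ≤ |C| := fun x => (hb x).trans (le_abs_self C)
  set u : X → ℕ → ℝ := fun x n => birkhoffSum T g n x / n with hu
  have hub : ∀ x n, |u x n| ≤ |C| := by
    intro x n
    rcases Nat.eq_zero_or_pos n with rfl | hn
    · simp [hu, birkhoffSum_zero, abs_nonneg]
    · have hpos : (0:ℝ) < n := by exact_mod_cast hn
      rw [hu, abs_div, abs_of_pos hpos, div_le_iff₀ hpos]
      exact (abs_birkhoffSum_le T hb' n x).trans (by rw [mul_comm])
  have hubdd : ∀ x, IsBoundedUnder (· ≤ ·) atTop (u x) :=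
    fun x => isBoundedUnder_of ⟨|C|, fun n => (le_abs_self _).trans (hub x n)⟩
  have hlbdd : ∀ x, IsBoundedUnder (· ≥ ·) atTop (u x) :=
    fun x => isBoundedUnder_of ⟨-|C|, fun n => neg_le_of_abs_le (hub x n)⟩
  set h : X → ℝ := fun x => limsup (u x) atTop with hh
  have hmeas : Measurable h :=
    Measurable.limsup (fun n => (measurable_birkhoffSum hT.measurable hg n).div_const n)
  have hinv : ∀ x, h (T x) = h x := by
    intro x
    have key : ∀ n : ℕ, birkhoffSum T g n (T x) = birkhoffSum T g (n + 1) x - g x := by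
      intro n
      rw [birkhoffSum_succ' T g n x]; ring
    have h1 : limsup (u (T x)) atTop = limsup (fun n => u x (n + 1)) atTop := by
      apply limsup_eq_limsup_of_tendsto_sub
      · -- (u (T x) n - u x (n+1)) → 0
        apply squeeze_zero_norm' (a := fun n : ℕ => 2 * |C| / n)
        · filter_upwards [eventually_ge_atTop 1] with n hn
          have hpos : (0:ℝ) < n := by exact_mod_cast hn
          have hpos1 : (0:ℝ) < (n:ℝ) + 1 := by positivity
          have hSb := abs_birkhoffSum_le T hb' (n + 1) x
          rw [Real.norm_eq_abs]
          have hexp : u (T x) n - u x (n + 1)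
              = birkhoffSum T g (n+1) x / ((n:ℝ) * ((n:ℝ)+1)) - g x / n := by
            simp only [hu, key n, Nat.cast_succ]
            field_simp
            ring
          rw [hexp]
          have h1 : |birkhoffSum T g (n+1) x / ((n:ℝ) * ((n:ℝ)+1))| ≤ |C| / n := by
            rw [abs_div, abs_of_pos (mul_pos hpos hpos1)]
            rw [div_le_div_iff₀ (mul_pos hpos hpos1) hpos]
            calc |birkhoffSum T g (n+1) x| * n ≤ (((n:ℝ)+1) * |C|) * n := by
                  apply mul_le_mul_of_nonneg_right _ hpos.le
                  simpa [Nat.cast_succ] using hSb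
              _ = |C| * ((n:ℝ) * ((n:ℝ)+1)) := by ring
          have h2 : |g x / n| ≤ |C| / n := by
            rw [abs_div, abs_of_pos hpos]
            exact (div_le_div_iff_of_pos_right hpos).mpr (hb' x)
          calc |birkhoffSum T g (n+1) x / ((n:ℝ) * ((n:ℝ)+1)) - g x / n|
              ≤ |birkhoffSum T g (n+1) x / ((n:ℝ) * ((n:ℝ)+1))| + |g x / n| := abs_sub _ _
            _ ≤ |C| / n + |C| / n := add_le_add h1 h2
            _ = 2 * |C| / n := by ring
        · have : Tendsto (fun n : ℕ => (n:ℝ)) atTop atTop := tendsto_natCast_atTop_atTop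
          simpa using Tendsto.div_atTop tendsto_const_nhds this
      · exact isBoundedUnder_of ⟨|C|, fun n => (le_abs_self _).trans (hub x (n + 1))⟩
      · exact isBoundedUnder_of ⟨-|C|, fun n => neg_le_of_abs_le (hub x (n + 1))⟩
    rw [hh]
    simp only
    rw [h1, ← limsup_nat_add (u x) 1]
  set D : Set X := {x | a < h x} with hD
  have hDm : MeasurableSet D := measurableSet_lt measurable_const hmeas
  have hDinv : T ⁻¹' D = D := by
    ext x; simp only [Set.mem_preimage, hD, Set.mem_setOf_eq, hinv x]
  rcases hT.toPreErgodic.ae_empty_or_univ hDm hDinv with hnull | hfull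
  · -- μ D = 0, done
    have : μ D = 0 := by
      have := measure_congr hnull
      simpa using this
    filter_upwards [measure_eq_zero_iff_ae_notMem.mp this] with x hx
    exact not_lt.mp hx
  · -- μ D = 1, contradiction with maximal ergodic lemma
    exfalso
    have hμD : μ D = 1 := by
      have := measure_congr hfull
      simpa using this
    set g' : X → ℝ := fun y => g y - a with hg'
    have hg'm : Measurable g' := hg.sub measurable_const
    have hg'b : ∀ x, |g' x| ≤ |C| + |a| := by
      intro x
      calc |g x - a| ≤ |g x| + |a| := abs_sub _ _
        _ ≤ |C| + |a| := add_le_add (hb' x) le_rfl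
    set E := {x | ∃ n : ℕ, 0 < birkhoffSum T g' (n + 1) x} with hEdef
    have hEm : MeasurableSet E := by
      rw [hEdef]
      have : E = ⋃ n : ℕ, {x | 0 < birkhoffSum T g' (n + 1) x} := by
        ext x; simp [hEdef]
      rw [← hEdef, this]
      exact MeasurableSet.iUnion fun n =>
        measurableSet_lt measurable_const (measurable_birkhoffSum hT.measurable hg'm (n + 1))
    have hDE : D ⊆ E := by
      intro x hx
      have hfreq : ∃ᶠ n in atTop, a < u x n :=
        frequently_lt_of_lt_limsup ((hlbdd x).isCoboundedUnder_le) hx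
      obtain ⟨n, hn1, hn2⟩ := (hfreq.and_eventually (eventually_ge_atTop 1)).exists
      have hpos : (0:ℝ) < n := by exact_mod_cast hn2
      have : (n:ℝ) * a < birkhoffSum T g n x := by
        rw [hu] at hn1
        simp only at hn1
        calc (n:ℝ) * a = a * n := mul_comm _ _
          _ < birkhoffSum T g n x := by
            rwa [← lt_div_iff₀ hpos]
      refine ⟨n - 1, ?_⟩
      have hn' : n - 1 + 1 = n := Nat.succ_pred_eq_of_pos hn2
      rw [hn', birkhoffSum_sub_const]
      linarith
    have hμE : μ Eᶜ = 0 := by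
      have h1 : μ E = 1 := le_antisymm prob_le_one (hμD ▸ measure_mono hDE)
      rw [measure_compl hEm (measure_ne_top μ E), h1, measure_univ, tsub_self]
    have hmax := maximal_ergodic hT.toMeasurePreserving hg'm hg'b
    rw [← hEdef] at hmax
    have hg'i : Integrable g' μ := by
      refine (integrable_const (|C| + |a|)).mono' hg'm.aestronglyMeasurable ?_
      exact .of_forall fun x => by simpa [Real.norm_eq_abs] using hg'b x
    have heq : ∫ x in E, g' x ∂μ = ∫ x, g' x ∂μ := by
      rw [← integral_add_compl hEm hg'i, setIntegral_measure_zero _ hμE, add_zero]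
    have hgi : Integrable g μ := by
      refine (integrable_const (|C|)).mono' hg.aestronglyMeasurable ?_
      exact .of_forall fun x => by simpa [Real.norm_eq_abs] using hb' x
    have hint : ∫ x, g' x ∂μ = (∫ x, g x ∂μ) - a := by
      rw [hg']
      rw [integral_sub hgi (integrable_const a), integral_const]
      simp
    rw [heq, hint] at hmax
    linarith


/-- Birkhoff's pointwise ergodic theorem for indicator functions (ergodic case). -/
lemma birkhoff_indicator_tendsto (hT : Ergodic T μ) {A : Set X} (hA : MeasurableSet A) :
    ∀ᵐ x ∂μ, Tendsto (fun n => birkhoffSum T (A.indicator (fun _ => (1:ℝ))) n x / n) atTop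
      (𝓝 (μ A).toReal) := by
  set f : X → ℝ := A.indicator (fun _ => (1:ℝ)) with hf
  set f' : X → ℝ := Aᶜ.indicator (fun _ => (1:ℝ)) with hf'
  have hfm : Measurable f := measurable_const.indicator hA
  have hf'm : Measurable f' := measurable_const.indicator hA.compl
  have hfb : ∀ y, |f y| ≤ 1 := by
    intro y; by_cases hy : y ∈ A <;>
      simp [hf, Set.indicator_of_mem, Set.indicator_of_notMem, hy]
  have hf'b : ∀ y, |f' y| ≤ 1 := by
    intro y; by_cases hy : y ∈ Aᶜ <;>
      simp [hf', Set.indicator_of_mem, Set.indicator_of_notMem, hy]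
  have hfsum : ∀ y, f y + f' y = 1 := by
    intro y; by_cases hy : y ∈ A <;>
      simp [hf, hf', Set.indicator_of_mem, Set.indicator_of_notMem, hy]
  set c : ℝ := (μ A).toReal with hc
  set c' : ℝ := (μ Aᶜ).toReal with hc'
  have hcc' : c + c' = 1 := by
    rw [hc, hc', ← ENNReal.toReal_add (measure_ne_top μ A) (measure_ne_top μ Aᶜ),
      measure_add_measure_compl hA, measure_univ, ENNReal.toReal_one]
  have hintf : ∫ x, f x ∂μ = c := by
    rw [hf, integral_indicator_const (1:ℝ) hA, smul_eq_mul, mul_one, hc]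
    rfl
  have hintf' : ∫ x, f' x ∂μ = c' := by
    rw [hf', integral_indicator_const (1:ℝ) hA.compl, smul_eq_mul, mul_one, hc']
    rfl
  have h1 : ∀ k : ℕ, ∀ᵐ x ∂μ,
      limsup (fun n => birkhoffSum T f n x / n) atTop ≤ c + 1/(k+1) := by
    intro k
    refine birkhoff_limsup_le hT hfm hfb ?_
    rw [hintf]
    have h0 : (0:ℝ) < 1/((k:ℝ)+1) := by positivity
    linarith
  have h2 : ∀ k : ℕ, ∀ᵐ x ∂μ,
      limsup (fun n => birkhoffSum T f' n x / n) atTop ≤ c' + 1/(k+1) := by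
    intro k
    refine birkhoff_limsup_le hT hf'm hf'b ?_
    rw [hintf']
    have h0 : (0:ℝ) < 1/((k:ℝ)+1) := by positivity
    linarith
  filter_upwards [ae_all_iff.mpr h1, ae_all_iff.mpr h2] with x hx1 hx2
  set u : ℕ → ℝ := fun n => birkhoffSum T f n x / n with hu
  set u' : ℕ → ℝ := fun n => birkhoffSum T f' n x / n with hu'
  have hub : ∀ n, |u n| ≤ 1 := by
    intro n
    rcases Nat.eq_zero_or_pos n with rfl | hn
    · simp [hu]
    · have hpos : (0:ℝ) < n := by exact_mod_cast hn
      rw [hu]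
      simp only
      rw [abs_div, abs_of_pos hpos, div_le_one hpos]
      simpa using abs_birkhoffSum_le T hfb n x
  have hu'b : ∀ n, |u' n| ≤ 1 := by
    intro n
    rcases Nat.eq_zero_or_pos n with rfl | hn
    · simp [hu']
    · have hpos : (0:ℝ) < n := by exact_mod_cast hn
      rw [hu']
      simp only
      rw [abs_div, abs_of_pos hpos, div_le_one hpos]
      simpa using abs_birkhoffSum_le T hf'b n x
  have hubdd : IsBoundedUnder (· ≤ ·) atTop u :=
    isBoundedUnder_of ⟨1, fun n => (le_abs_self _).trans (hub n)⟩
  have hlbdd : IsBoundedUnder (· ≥ ·) atTop u :=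
    isBoundedUnder_of ⟨-1, fun n => neg_le_of_abs_le (hub n)⟩
  have hu'bdd : IsBoundedUnder (· ≤ ·) atTop u' :=
    isBoundedUnder_of ⟨1, fun n => (le_abs_self _).trans (hu'b n)⟩
  have husum : ∀ n : ℕ, 1 ≤ n → u n + u' n = 1 := by
    intro n hn
    have hpos : (0:ℝ) < n := by exact_mod_cast hn
    have : birkhoffSum T f n x + birkhoffSum T f' n x = n := by
      rw [birkhoffSum, birkhoffSum, ← Finset.sum_add_distrib]
      simp only [hfsum]
      simp
    rw [hu, hu']
    simp only
    field_simp
    linarith [this]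
  have hsup : limsup u atTop ≤ c := by
    refine le_of_forall_pos_le_add fun ε hε => ?_
    obtain ⟨k, hk⟩ := exists_nat_one_div_lt hε
    exact (hx1 k).trans (by push_cast; linarith [hk])
  have hsup' : limsup u' atTop ≤ c' := by
    refine le_of_forall_pos_le_add fun ε hε => ?_
    obtain ⟨k, hk⟩ := exists_nat_one_div_lt hε
    exact (hx2 k).trans (by push_cast; linarith [hk])
  have hinf : c ≤ liminf u atTop := by
    by_contra hlt
    push_neg at hlt
    obtain ⟨b, hb1, hb2⟩ := exists_between hlt
    have hfreq : ∃ᶠ n in atTop, u n < b :=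
      frequently_lt_of_liminf_lt hubdd.isCoboundedUnder_ge hb1
    have hev : ∀ᶠ n in atTop, u' n < 1 - b := by
      refine eventually_lt_of_limsup_lt (lt_of_le_of_lt hsup' ?_) hu'bdd
      linarith
    obtain ⟨n, hn1, hn2, hn3⟩ := (hfreq.and_eventually (hev.and (eventually_ge_atTop 1))).exists
    have := husum n hn3
    linarith
  exact tendsto_of_le_liminf_of_limsup_le hinf hsup hubdd hlbdd

end BirkhoffAux

set_option maxHeartbeats 1000000 in
theorem uniform_visit_frequency {X : Type*} [MeasurableSpace X] (μ : Measure X)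
    [IsProbabilityMeasure μ] (T : X → X) (hT : Ergodic T μ)
    (A : Set X) (hA : MeasurableSet A) (hAbig : μ A ≥ 1 - 1/10000)
    (κ : ℝ) (hκ : 0 < κ) :
    ∃ (V : Set X) (N₁ : ℕ), MeasurableSet V ∧ μ V > 99/100 ∧
      ∀ M L : ℕ, N₁ ≤ M → N₁ ≤ L → κ ≤ (L : ℝ) / (M : ℝ) → ∀ x ∈ V,
        (0.99 : ℝ) ≤ (1 / (L : ℝ)) *
          ((Finset.Icc M (M + L)).filter (fun n => T^[n] x ∈ A)).card := by
  classical
  set f : X → ℝ := A.indicator (fun _ => (1:ℝ)) with hf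
  have hfm : Measurable f := measurable_const.indicator hA
  set c : ℝ := (μ A).toReal with hc
  -- c is close to 1
  have hcsum : (μ A).toReal + (μ Aᶜ).toReal = 1 := by
    rw [← ENNReal.toReal_add (measure_ne_top μ A) (measure_ne_top μ Aᶜ),
      measure_add_measure_compl hA, measure_univ, ENNReal.toReal_one]
  have hAc : μ Aᶜ ≤ 1/10000 := by
    have h1 : μ Aᶜ = 1 - μ A := prob_compl_eq_one_sub hA
    have h2 : (1:ℝ≥0∞) - μ A ≤ 1 - (1 - 1/10000) := tsub_le_tsub_left hAbig 1
    have h3 : (1:ℝ≥0∞) - (1 - 1/10000) = 1/10000 := by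
      refine ENNReal.sub_sub_cancel (by norm_num) ?_
      exact ENNReal.div_le_of_le_mul (by norm_num)
    rw [h1]
    rw [h3] at h2
    exact h2
  have hAcr : (μ Aᶜ).toReal ≤ 1/10000 := by
    have := ENNReal.toReal_mono (by norm_num) hAc
    simpa [ENNReal.toReal_div] using this
  have hcge : (9999/10000 : ℝ) ≤ c := by rw [hc]; linarith
  -- Egorov
  have hconv := birkhoff_indicator_tendsto hT hA
  obtain ⟨t, htm, htμ, hunif⟩ :=
    tendstoUniformlyOn_of_ae_tendsto' (μ := μ)
      (f := fun (n : ℕ) (x : X) => birkhoffSum T f n x / n) (g := fun _ => c)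
      (fun n => ((measurable_birkhoffSum hT.measurable hfm n).div_const _).stronglyMeasurable)
      stronglyMeasurable_const hconv (ε := 1/1000) (by norm_num)
  have hVm : MeasurableSet tᶜ := htm.compl
  have hVμ : μ tᶜ > 99/100 := by
    have hts : (μ t).toReal + (μ tᶜ).toReal = 1 := by
      rw [← ENNReal.toReal_add (measure_ne_top μ t) (measure_ne_top μ tᶜ),
        measure_add_measure_compl htm, measure_univ, ENNReal.toReal_one]
    have htr : (μ t).toReal ≤ 1/1000 := by
      have := ENNReal.toReal_mono ENNReal.ofReal_ne_top htμ
      rwa [ENNReal.toReal_ofReal (by norm_num)] at this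
    rw [gt_iff_lt, ← ENNReal.toReal_lt_toReal ((ENNReal.div_lt_top (by norm_num) (by norm_num)).ne) (measure_ne_top μ tᶜ)]
    have : ((99/100 : ℝ≥0∞)).toReal = 99/100 := by
      simp [ENNReal.toReal_div]
    rw [this]
    linarith
  -- choose δ and N₁
  set δ : ℝ := (9/1000) / (2/κ + 2) with hδdef
  have hκ2 : (0:ℝ) < 2/κ + 2 := by positivity
  have hδ : 0 < δ := by positivity
  have hδval : δ * (2/κ + 2) = 9/1000 := div_mul_cancel₀ _ (ne_of_gt hκ2)
  rw [Metric.tendstoUniformlyOn_iff] at hunif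
  obtain ⟨N₀, hN₀⟩ := eventually_atTop.mp (hunif δ hδ)
  refine ⟨tᶜ, max N₀ 1, hVm, hVμ, ?_⟩
  intro M L hM hL hκML x hx
  have hM0 : N₀ ≤ M := le_trans (le_max_left _ _) hM
  have hM1 : 1 ≤ M := le_trans (le_max_right _ _) hM
  have hL1 : 1 ≤ L := le_trans (le_max_right _ _) hL
  have hMr : (1:ℝ) ≤ M := by exact_mod_cast hM1
  have hLr : (1:ℝ) ≤ L := by exact_mod_cast hL1
  have hMpos : (0:ℝ) < M := by linarith
  have hLpos : (0:ℝ) < L := by linarith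
  -- uniform estimates at times M and M + L + 1
  have hd1 : dist c (birkhoffSum T f M x / M) < δ := hN₀ M hM0 x hx
  have hd2 : dist c (birkhoffSum T f (M + L + 1) x / ((M + L + 1 : ℕ) : ℝ)) < δ :=
    hN₀ (M + L + 1) (by omega) x hx
  rw [Real.dist_eq, abs_lt] at hd1 hd2
  have hMLpos : (0:ℝ) < ((M + L + 1 : ℕ) : ℝ) := by positivity
  have hS1 : birkhoffSum T f M x < (M:ℝ) * (c + δ) := by
    have h := hd1.1
    have : birkhoffSum T f M x / M < c + δ := by linarith
    calc birkhoffSum T f M x = (birkhoffSum T f M x / M) * M := by field_simp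
      _ < (c + δ) * M := by exact mul_lt_mul_of_pos_right this hMpos
      _ = (M:ℝ) * (c + δ) := by ring
  have hS2 : ((M:ℝ) + L + 1) * (c - δ) < birkhoffSum T f (M + L + 1) x := by
    have h := hd2.2
    have hlt : c - δ < birkhoffSum T f (M + L + 1) x / ((M + L + 1 : ℕ) : ℝ) := by linarith
    have := mul_lt_mul_of_pos_right hlt hMLpos
    rw [div_mul_cancel₀ _ (ne_of_gt hMLpos)] at this
    calc ((M:ℝ) + L + 1) * (c - δ) = (c - δ) * ((M + L + 1 : ℕ) : ℝ) := by push_cast; ring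
      _ < birkhoffSum T f (M + L + 1) x := this
  -- the visit count equals a difference of Birkhoff sums
  have hcard : (((Finset.Icc M (M + L)).filter (fun n => T^[n] x ∈ A)).card : ℝ)
      = birkhoffSum T f (M + L + 1) x - birkhoffSum T f M x := by
    have h1 : birkhoffSum T f (M + L + 1) x - birkhoffSum T f M x
        = ∑ k ∈ Finset.Ico M (M + L + 1), f (T^[k] x) := by
      rw [Finset.sum_Ico_eq_sub _ (by omega)]
      rfl
    rw [h1, Finset.Ico_add_one_right_eq_Icc]
    rw [Finset.card_filter]
    push_cast
    refine Finset.sum_congr rfl fun k _ => ?_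
    by_cases hk : T^[k] x ∈ A <;>
      simp [hf, Set.indicator_of_mem, Set.indicator_of_notMem, hk]
  -- arithmetic conclusion
  have hMLκ : (M:ℝ) ≤ L / κ := by
    rw [le_div_iff₀ hκ]
    have := (le_div_iff₀ hMpos).mp hκML
    linarith
  have hbound : δ * (2*(M:ℝ) + L + 1) ≤ (9/1000) * L := by
    have h2 : 2*(M:ℝ) + L + 1 ≤ (2/κ + 2) * L := by
      have ha : 2*(M:ℝ) ≤ 2 * (L/κ) := by linarith
      have hb : 2 * ((L:ℝ)/κ) = (2/κ) * L := by ring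
      nlinarith
    calc δ * (2*(M:ℝ) + L + 1) ≤ δ * ((2/κ + 2) * L) :=
          mul_le_mul_of_nonneg_left h2 hδ.le
      _ = (δ * (2/κ + 2)) * L := by ring
      _ = (9/1000) * L := by rw [hδval]
  have he1 : ((M:ℝ) + L + 1)*(c - δ) - (M:ℝ)*(c + δ) = ((L:ℝ) + 1)*c - δ*(2*(M:ℝ) + L + 1) := by
    ring
  have hLc : (L:ℝ) * (9999/10000) ≤ (L:ℝ) * c :=
    mul_le_mul_of_nonneg_left hcge (by linarith)
  have hc0 : (0:ℝ) ≤ c := by linarith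
  have hkey : (0.99:ℝ) * L ≤ birkhoffSum T f (M + L + 1) x - birkhoffSum T f M x := by
    have hdiff : ((L:ℝ) + 1)*c - δ*(2*(M:ℝ) + L + 1)
        ≤ birkhoffSum T f (M + L + 1) x - birkhoffSum T f M x := by
      rw [← he1]; linarith
    have hexp : ((L:ℝ) + 1)*c = (L:ℝ)*c + c := by ring
    have h99 : (0.99:ℝ) = 99/100 := by norm_num
    rw [h99]
    linarith
  rw [hcard, one_div, inv_mul_eq_div, le_div_iff₀ hLpos]
  linarith
end
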